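/- arXiv:2009.00066 — 2 statements merged into one kernel-verified Lean document; each statement's English description precedes it below -/
import Mathlib

section
/- Let 0 < a < 1 and let g be a complete Riemannian metric on Ω_a = {z ∈ ℂ : a < |z| ≤ 1} conformal to the Euclidean metric (complete towards the inner boundary). Then the total area of Ω_a with respect to g is infinite: μ_g(Ω_a) = +∞. -/
open MeasureTheory Filter Set
open scoped ENNReal

noncomputable section

/-- The half-open annulus `{z : a < |z| ≤ 1}`. -/
def ann (a : ℝ) : Set ℂ := {z : ℂ | a < ‖z‖ ∧ ‖z‖ ≤ 1}

/-- Length of a curve `γ` with respect to the conformal metric with length weight `w`. -/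
def glen (w : ℂ → ℝ) (γ : ℝ → ℂ) : ℝ := ∫ t in (0:ℝ)..1, w (γ t) * ‖deriv γ t‖

/-- Extended length, on `[0,1)`. -/
def glenE (w : ℂ → ℝ) (γ : ℝ → ℂ) : ℝ≥0∞ :=
  ∫⁻ t in Set.Ico (0:ℝ) 1, ENNReal.ofReal (w (γ t) * ‖deriv γ t‖)

/-- A `1`-periodic piecewise-smooth loop with values in `S`. -/
def IsLoopIn (S : Set ℂ) (γ : ℝ → ℂ) : Prop :=
  ContDiff ℝ 1 γ ∧ (∀ t, γ t ∈ S) ∧ ∀ t, γ (t + 1) = γ t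

/-- The loop `γ` is null-homotopic inside `S` (through `1`-periodic free loops). -/
def NullHomotopicIn (S : Set ℂ) (γ : ℝ → ℂ) : Prop :=
  ∃ H : ℝ → ℝ → ℂ, Continuous (Function.uncurry H) ∧ (∀ s t, H s t ∈ S) ∧
    (∀ s t, H s (t + 1) = H s t) ∧ (∀ t, H 0 t = γ t) ∧ ∃ c, ∀ t, H 1 t = c

/-- Width: infimum of lengths of homotopically nontrivial loops in the annulus. -/
def gwidth (a : ℝ) (w : ℂ → ℝ) : ℝ :=
  sInf {L | ∃ γ : ℝ → ℂ, IsLoopIn (ann a) γ ∧ ¬ NullHomotopicIn (ann a) γ ∧ L = glen w γ}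

/-- Completeness towards the inner boundary: curves approaching `{|z| = a}` have infinite length. -/
def CompleteInner (a : ℝ) (w : ℂ → ℝ) : Prop :=
  ∀ γ : ℝ → ℂ, ContDiffOn ℝ 1 γ (Set.Ico (0:ℝ) 1) →
    (∀ t ∈ Set.Ico (0:ℝ) 1, γ t ∈ ann a) →
    Tendsto (fun t => ‖γ t‖) (nhdsWithin 1 (Set.Iio 1)) (nhds a) →
    glenE w γ = ⊤

/-- Flat Laplacian `∂²u/∂x² + ∂²u/∂y²` on `ℂ ≅ ℝ²`. -/
def lap (u : ℂ → ℝ) (z : ℂ) : ℝ :=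
  iteratedFDeriv ℝ 2 u z (fun _ => (1:ℂ)) + iteratedFDeriv ℝ 2 u z (fun _ => Complex.I)

/-- Distance between sets `A`, `B` within `S`, for the metric with length weight `w`. -/
def gdistS (S : Set ℂ) (w : ℂ → ℝ) (A B : Set ℂ) : ℝ :=
  sInf {L | ∃ γ : ℝ → ℂ, ContDiff ℝ 1 γ ∧ (∀ t ∈ Set.Icc (0:ℝ) 1, γ t ∈ S) ∧
    γ 0 ∈ A ∧ γ 1 ∈ B ∧ L = glen w γ}

/-- Euclidean Dirichlet energy over a plane domain. -/
def dirEnergy (Ω : Set ℂ) (u : ℂ → ℝ) : ℝ := ∫ z in Ω, ‖fderiv ℝ u z‖ ^ 2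

end

set_option maxHeartbeats 1000000 in
/-- a conformal metric `g = e^{2u}|dz|²` on the half-open annulus
which is complete towards the inner boundary has infinite total area. -/
theorem stmt_4 (a : ℝ) (ha : 0 < a) (ha1 : a < 1)
    (u : ℂ → ℝ) (hu : ContinuousOn u (ann a))
    (hcomp : CompleteInner a (fun z => Real.exp (u z))) :
    (∫⁻ z in ann a, ENNReal.ofReal (Real.exp (2 * u z))) = ⊤ := by
  by_contra hfin
  have hmeas : MeasurableSet (ann a) := by
    have h : ann a = (fun z : ℂ => ‖z‖) ⁻¹' (Set.Ioc a 1) := by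
      ext z; simp [ann, Set.mem_Ioc]
    rw [h]
    exact measurableSet_Ioc.preimage continuous_norm.measurable
  set F : ℂ → ℝ≥0∞ := (ann a).indicator (fun z => ENNReal.ofReal (Real.exp (2 * u z)))
    with hF_def
  have hF : AEMeasurable F volume := by
    rw [hF_def, aemeasurable_indicator_iff hmeas]
    exact (ENNReal.continuous_ofReal.comp_continuousOn
      (Real.continuous_exp.comp_continuousOn (continuousOn_const.mul hu))).aemeasurable hmeas
  have hFtot : ∫⁻ z, F z ≠ ⊤ := by
    rw [hF_def, lintegral_indicator hmeas]
    exact hfin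
  -- transfer to ℝ × ℝ with coordinates (y, x) ↦ x + y i
  set g : (ℝ × ℝ) ≃ᵐ ℂ :=
    (MeasurableEquiv.prodComm).trans Complex.measurableEquivRealProd.symm with hg_def
  have hMP : MeasurePreserving g ((volume : Measure ℝ).prod volume) volume := by
    have h1 : MeasurePreserving (Complex.measurableEquivRealProd.symm)
        (volume : Measure (ℝ × ℝ)) (volume : Measure ℂ) :=
      Complex.volume_preserving_equiv_real_prod.symm _
    have h2 : MeasurePreserving (Prod.swap : ℝ × ℝ → ℝ × ℝ)
        ((volume : Measure ℝ).prod volume) (volume : Measure (ℝ × ℝ)) := by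
      rw [Measure.volume_eq_prod]; exact Measure.measurePreserving_swap
    exact h1.comp h2
  set f2 : ℝ × ℝ → ℝ≥0∞ := fun p => F ((p.2 : ℂ) + (p.1 : ℂ) * Complex.I) with hf2_def
  have hgF : (fun p : ℝ × ℝ => F (g p)) = f2 := by
    funext p
    exact congrArg F (Complex.mk_eq_add_mul_I p.2 p.1)
  have hf2 : AEMeasurable f2 ((volume : Measure ℝ).prod volume) := by
    rw [← hgF]
    exact hF.comp_quasiMeasurePreserving hMP.quasiMeasurePreserving
  have hEq : ∫⁻ z, F z = ∫⁻ p, f2 p ∂((volume : Measure ℝ).prod volume) := by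
    rw [← hgF]
    exact hMP.lintegral_map_equiv F g
  have hTon : ∫⁻ p, f2 p ∂((volume : Measure ℝ).prod volume)
      = ∫⁻ y, ∫⁻ x, f2 (y, x) := lintegral_prod f2 hf2
  obtain ⟨G, hGmeas, hFG⟩ := hf2
  have hae1 : ∀ᵐ y : ℝ, ∀ᵐ x : ℝ, f2 (y, x) = G (y, x) := Measure.ae_ae_of_ae_prod hFG
  have hGtot : ∫⁻ y, ∫⁻ x, G (y, x) ≠ ⊤ := by
    have h : ∫⁻ y, ∫⁻ x, f2 (y, x) = ∫⁻ y, ∫⁻ x, G (y, x) :=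
      lintegral_congr_ae (hae1.mono fun y hy => lintegral_congr_ae hy)
    rw [← h, ← hTon, ← hEq]
    exact hFtot
  have hae2 : ∀ᵐ y : ℝ, ∫⁻ x, G (y, x) < ⊤ := ae_lt_top hGmeas.lintegral_prod_right' hGtot
  have hae3 := hae1.and hae2
  have hex : ∃ y ∈ Ioo (0:ℝ) (a/2),
      (∀ᵐ x : ℝ, f2 (y, x) = G (y, x)) ∧ ∫⁻ x, G (y, x) < ⊤ := by
    by_contra hcon
    have hsub : Ioo (0:ℝ) (a/2) ⊆
        {y | ¬ ((∀ᵐ x : ℝ, f2 (y, x) = G (y, x)) ∧ ∫⁻ x, G (y, x) < ⊤)} :=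
      fun y hy hP => hcon ⟨y, hy, hP⟩
    have h0 : volume (Ioo (0:ℝ) (a/2)) = 0 :=
      measure_mono_null hsub (MeasureTheory.ae_iff.mp hae3)
    rw [Real.volume_Ioo] at h0
    simp only [ENNReal.ofReal_eq_zero] at h0
    linarith
  obtain ⟨y, ⟨hy0, hy2⟩, hyae, hyfin⟩ := hex
  set Fy : ℝ → ℝ≥0∞ := fun x => F ((x : ℂ) + (y : ℂ) * Complex.I) with hFy_def
  have hFy_ae : Fy =ᵐ[volume] fun x => G (y, x) := hyae
  have hFy_meas : AEMeasurable Fy volume :=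
    ((hGmeas.comp measurable_prodMk_left).aemeasurable).congr hFy_ae.symm
  have hFy_fin : ∫⁻ x, Fy x < ⊤ := by
    rw [lintegral_congr_ae hFy_ae]; exact hyfin
  -- geometry
  have hya : y < a := by linarith
  have hy2a : y ^ 2 < a ^ 2 := by nlinarith
  have hm : a ^ 2 < (a ^ 2 + 1) / 2 := by nlinarith
  set r : ℝ := Real.sqrt (a ^ 2 - y ^ 2) with hr_def
  set c : ℝ := Real.sqrt ((a ^ 2 + 1) / 2 - y ^ 2) with hc_def
  have hr2 : r ^ 2 = a ^ 2 - y ^ 2 := Real.sq_sqrt (by nlinarith)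
  have hc2 : c ^ 2 = (a ^ 2 + 1) / 2 - y ^ 2 := Real.sq_sqrt (by nlinarith)
  have hr0 : 0 ≤ r := Real.sqrt_nonneg _
  have hc0 : 0 ≤ c := Real.sqrt_nonneg _
  have hrc : r < c := by
    rw [hr_def, hc_def]
    exact Real.sqrt_lt_sqrt (by nlinarith) (by nlinarith)
  have hcr : (0:ℝ) < c - r := sub_pos.2 hrc
  set γ : ℝ → ℂ := fun t => ((c + (r - c) * t : ℝ) : ℂ) + (y : ℂ) * Complex.I with hγ_def
  have hder : ∀ t, HasDerivAt γ ((r - c : ℝ) : ℂ) t := by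
    intro t
    have h1 : HasDerivAt (fun t : ℝ => c + (r - c) * t) (r - c) t := by
      simpa using ((hasDerivAt_id t).const_mul (r - c)).const_add c
    exact (h1.ofReal_comp).add_const _
  have hderiv : ∀ t, deriv γ t = ((r - c : ℝ) : ℂ) := fun t => (hder t).deriv
  have hγ_cd : ContDiff ℝ 1 γ := by
    apply ContDiff.add _ contDiff_const
    exact Complex.ofRealCLM.contDiff.comp (contDiff_const.add (contDiff_const.mul contDiff_id))
  have habs : ∀ t, ‖γ t‖ = Real.sqrt ((c + (r - c) * t) ^ 2 + y ^ 2) := fun t =>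
    Complex.norm_add_mul_I _ _
  have hmem : ∀ t ∈ Ico (0:ℝ) 1, γ t ∈ ann a := by
    intro t ht
    obtain ⟨ht0, ht1⟩ := ht
    have hx1 : r < c + (r - c) * t := by nlinarith
    have hx2 : c + (r - c) * t ≤ c := by nlinarith
    constructor
    · rw [habs t, show a = Real.sqrt (a ^ 2) from (Real.sqrt_sq ha.le).symm]
      exact Real.sqrt_lt_sqrt (by positivity) (by nlinarith)
    · rw [habs t, show (1:ℝ) = Real.sqrt 1 from Real.sqrt_one.symm]
      exact Real.sqrt_le_sqrt (by nlinarith)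
  have htend : Tendsto (fun t => ‖γ t‖) (nhdsWithin 1 (Iio 1)) (nhds a) := by
    have hca : Continuous fun t => ‖γ t‖ :=
      continuous_norm.comp hγ_cd.continuous
    have h1 : ‖γ 1‖ = a := by
      rw [habs 1, show (c + (r - c) * 1) ^ 2 + y ^ 2 = a ^ 2 from by nlinarith]
      exact Real.sqrt_sq ha.le
    have h2 := hca.tendsto 1
    rw [h1] at h2
    exact h2.mono_left nhdsWithin_le_nhds
  have htop := hcomp γ hγ_cd.contDiffOn hmem htend
  refine absurd htop ?_
  unfold glenE
  have hnorm : ∀ t, ‖deriv γ t‖ = c - r := by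
    intro t
    rw [hderiv t, Complex.norm_real, Real.norm_eq_abs, abs_sub_comm, abs_of_pos hcr]
  have hptwise : ∀ t ∈ Ico (0:ℝ) 1,
      ENNReal.ofReal (Real.exp (u (γ t)) * ‖deriv γ t‖)
        ≤ ENNReal.ofReal (c - r) + ENNReal.ofReal (c - r) * F (γ t) := by
    intro t ht
    rw [hnorm t]
    have hFt : F (γ t) = ENNReal.ofReal (Real.exp (2 * u (γ t))) :=
      indicator_of_mem (hmem t ht) _
    rw [hFt, ← ENNReal.ofReal_mul hcr.le, ← ENNReal.ofReal_add hcr.le (by positivity)]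
    apply ENNReal.ofReal_le_ofReal
    have h1 : Real.exp (u (γ t)) ≤ 1 + Real.exp (2 * u (γ t)) := by
      rcases le_or_gt (u (γ t)) 0 with h | h
      · have h2 := Real.exp_le_one_iff.2 h
        have h3 := (Real.exp_pos (2 * u (γ t))).le
        linarith
      · have h2 : u (γ t) ≤ 2 * u (γ t) := by linarith
        have h3 := Real.exp_le_exp.2 h2
        linarith
    nlinarith [hcr.le]
  have hchain : (∫⁻ t in Ico (0:ℝ) 1, ENNReal.ofReal (Real.exp (u (γ t)) * ‖deriv γ t‖))
      ≤ ENNReal.ofReal (c - r) * volume (Ico (0:ℝ) 1)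
        + ENNReal.ofReal (c - r) * ∫⁻ t in Ico (0:ℝ) 1, F (γ t) := by
    have h1 : (∫⁻ t in Ico (0:ℝ) 1, ENNReal.ofReal (Real.exp (u (γ t)) * ‖deriv γ t‖))
        ≤ ∫⁻ t in Ico (0:ℝ) 1,
            (ENNReal.ofReal (c - r) + ENNReal.ofReal (c - r) * F (γ t)) := by
      apply lintegral_mono_ae
      filter_upwards [ae_restrict_mem measurableSet_Ico] with t ht
      exact hptwise t ht
    refine h1.trans ?_
    rw [lintegral_add_left measurable_const,
      lintegral_const_mul' _ _ ENNReal.ofReal_ne_top, setLIntegral_const]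
  -- substitution
  have hsub : (∫⁻ t : ℝ, Fy (c + (r - c) * t))
      = ENNReal.ofReal |(r - c)⁻¹| * ∫⁻ x, Fy x := by
    have hne : r - c ≠ 0 := by intro h; rw [sub_eq_zero] at h; exact hrc.ne h
    have hmg : AEMeasurable (fun t : ℝ => (r - c) * t) volume :=
      (measurable_const_mul _).aemeasurable
    have h1 : AEMeasurable (fun s : ℝ => Fy (c + s))
        (Measure.map (fun t : ℝ => (r - c) * t) volume) := by
      rw [Real.map_volume_mul_left hne]
      exact (hFy_meas.comp_quasiMeasurePreserving
        (measurePreserving_add_left volume c).quasiMeasurePreserving).smul_measure _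
    have h2 := lintegral_map' h1 hmg
    rw [Real.map_volume_mul_left hne, lintegral_smul_measure] at h2
    rw [← h2, lintegral_add_left_eq_self (fun s => Fy s) c, smul_eq_mul]
  have hle2 : (∫⁻ t in Ico (0:ℝ) 1, F (γ t)) ≤ ENNReal.ofReal |(r - c)⁻¹| * ∫⁻ x, Fy x := by
    rw [← hsub]
    exact setLIntegral_le_lintegral _ _
  have hA : ENNReal.ofReal (c - r) * volume (Ico (0:ℝ) 1)
      + ENNReal.ofReal (c - r) * (∫⁻ t in Ico (0:ℝ) 1, F (γ t)) ≠ ⊤ := by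
    apply ENNReal.add_ne_top.2
    constructor
    · exact ENNReal.mul_ne_top ENNReal.ofReal_ne_top (by simp [Real.volume_Ico])
    · refine ENNReal.mul_ne_top ENNReal.ofReal_ne_top ?_
      exact ne_top_of_le_ne_top
        (ENNReal.mul_ne_top ENNReal.ofReal_ne_top hFy_fin.ne) hle2
  exact ne_top_of_le_ne_top hA hchain
end

section
/- Let g be a metric on Ω_a = {z : a < |z| ≤ 1}, ε ∈ (0, 1-a) small, g̃ = |z|^{2λ}g, l_{1-ε} the g-length of the circle Γ_{1-ε} = {|z| = 1-ε}, and l_0(g) > 0 the width. If a minimizing sequence γ_k of homotopically nontrivial loops for the g̃-length satisfies Im γ_k ⊆ {z : 1 - ε/2 ≤ |z| ≤ 1} for infinitely many k, then λ ≤ log(l_{1-ε}/l_0) / (2 log((1-ε/2)/(1-ε))). -/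
open MeasureTheory Filter Set
open scoped ENNReal

section Aux

open Complex Filter Set MeasureTheory

lemma ann_ne_zero {a : ℝ} (ha : 0 ≤ a) {z : ℂ} (hz : z ∈ ann a) : z ≠ 0 := by
  intro h
  have h1 := hz.1
  rw [h] at h1
  simp only [norm_zero] at h1
  linarith

lemma circle_abs {R : ℝ} (hR : 0 ≤ R) (t : ℝ) :
    ‖(R : ℂ) * Complex.exp (2 * Real.pi * Complex.I * (t : ℂ))‖ = R := by
  rw [norm_mul, Complex.norm_real, Real.norm_eq_abs, _root_.abs_of_nonneg hR,
    show 2 * (Real.pi : ℂ) * Complex.I * (t : ℂ) = ((2 * Real.pi * t : ℝ) : ℂ) * Complex.I by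
      push_cast; ring,
    Complex.norm_exp_ofReal_mul_I, mul_one]

lemma circle_isLoopIn {a R : ℝ} (ha : 0 ≤ a) (haR : a < R) (hR1 : R ≤ 1) :
    IsLoopIn (ann a) (fun t : ℝ => (R : ℂ) * Complex.exp (2 * Real.pi * Complex.I * (t : ℂ))) := by
  have hRpos : 0 < R := lt_of_le_of_lt ha haR
  refine ⟨?_, ?_, ?_⟩
  · apply ContDiff.mul contDiff_const
    have h1 : ContDiff ℝ 1 fun t : ℝ => 2 * (Real.pi : ℂ) * Complex.I * (t : ℂ) :=
      ContDiff.mul contDiff_const Complex.ofRealCLM.contDiff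
    exact Complex.contDiff_exp.comp h1
  · intro t
    constructor
    · rw [circle_abs hRpos.le]; exact haR
    · rw [circle_abs hRpos.le]; exact hR1
  · intro t
    have h2 : 2 * (Real.pi : ℂ) * Complex.I * (((t + 1 : ℝ)) : ℂ)
        = 2 * Real.pi * Complex.I * (t : ℂ) + 2 * Real.pi * Complex.I := by push_cast; ring
    show (R : ℂ) * Complex.exp (2 * Real.pi * Complex.I * ((t + 1 : ℝ) : ℂ))
        = (R : ℂ) * Complex.exp (2 * Real.pi * Complex.I * (t : ℂ))
    rw [h2, Complex.exp_add, Complex.exp_two_pi_mul_I, mul_one]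

lemma circle_not_nullhomotopic {a R : ℝ} (ha : 0 ≤ a) (haR : a < R) :
    ¬ NullHomotopicIn (ann a)
      (fun t : ℝ => (R : ℂ) * Complex.exp (2 * Real.pi * Complex.I * (t : ℂ))) := by
  rintro ⟨H, hHc, hHmem, hHper, hH0, c, hH1⟩
  have hRpos : 0 < R := lt_of_le_of_lt ha haR
  have hne : ∀ s t, H s t ≠ 0 := fun s t => ann_ne_zero ha (hHmem s t)
  set K : Set (ℝ × ℝ) := Set.Icc 0 1 ×ˢ Set.Icc 0 1 with hKdef
  have hKc : IsCompact K := isCompact_Icc.prod isCompact_Icc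
  have hKne : K.Nonempty := ⟨(0, 0), ⟨le_rfl, zero_le_one⟩, ⟨le_rfl, zero_le_one⟩⟩
  obtain ⟨p0, hp0K, hp0⟩ := hKc.exists_isMinOn hKne
    ((continuous_norm.comp hHc).continuousOn)
  set m : ℝ := ‖Function.uncurry H p0‖ with hmdef
  have hmpos : 0 < m := norm_pos_iff.mpr (hne p0.1 p0.2)
  obtain ⟨δ, hδ, hδ'⟩ := (Metric.uniformContinuousOn_iff).mp
    (hKc.uniformContinuousOn_of_continuous hHc.continuousOn) m hmpos
  obtain ⟨n0, hn0⟩ := exists_nat_gt (1 / δ)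
  set n : ℕ := n0 + 2 with hndef
  have hnR : (0 : ℝ) < n := by
    have : 0 < n := by omega
    exact_mod_cast this
  have hn2 : (2 : ℝ) ≤ n := by
    have : 2 ≤ n := by omega
    exact_mod_cast this
  have hδn : (1 : ℝ) / n < δ := by
    have h1 : 1 / δ < (n : ℝ) := lt_of_lt_of_le hn0 (by exact_mod_cast Nat.le_add_right n0 2)
    have h2 : 1 < (n : ℝ) * δ := by
      rw [div_lt_iff₀ hδ] at h1; exact h1
    rw [div_lt_iff₀ hnR, mul_comm]; exact h2
  -- the discrete ratios
  set r : ℝ → ℕ → ℂ := fun s j => H s (((j : ℝ) + 1) / n) / H s ((j : ℝ) / n) with hrdef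
  set W : ℝ → ℝ := fun s => ∑ j ∈ Finset.range n, Complex.arg (r s j) with hWdef
  have hrne : ∀ s j, r s j ≠ 0 := fun s j => div_ne_zero (hne _ _) (hne _ _)
  -- key estimate
  have key : ∀ s ∈ Set.Icc (0 : ℝ) 1, ∀ j : ℕ, j < n →
      ‖r s j - 1‖ < 1 := by
    intro s hs j hj
    have ht1 : (j : ℝ) / n ∈ Set.Icc (0 : ℝ) 1 := by
      constructor
      · positivity
      · rw [div_le_one hnR]; exact_mod_cast hj.le
    have ht2 : ((j : ℝ) + 1) / n ∈ Set.Icc (0 : ℝ) 1 := by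
      constructor
      · positivity
      · rw [div_le_one hnR]
        exact_mod_cast Nat.succ_le_of_lt hj
    have hdist : dist ((s, ((j : ℝ) + 1) / n) : ℝ × ℝ) (s, (j : ℝ) / n) < δ := by
      rw [Prod.dist_eq]
      simp only [dist_self]
      rw [max_eq_right dist_nonneg, Real.dist_eq,
        show ((j : ℝ) + 1) / n - (j : ℝ) / n = 1 / n by ring,
        abs_of_pos (by positivity)]
      exact hδn
    have hlt := hδ' _ ⟨hs, ht2⟩ _ ⟨hs, ht1⟩ hdist
    have habs : ‖H s (((j : ℝ) + 1) / n) - H s ((j : ℝ) / n)‖ < m := by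
      simpa [Function.uncurry, Complex.dist_eq] using hlt
    have hden : m ≤ ‖H s ((j : ℝ) / n)‖ := by
      have := isMinOn_iff.mp hp0 (s, (j : ℝ) / n) ⟨hs, ht1⟩
      simpa [Function.uncurry, hmdef] using this
    have hd0 : H s ((j : ℝ) / n) ≠ 0 := hne _ _
    rw [hrdef]
    simp only
    rw [div_sub_one hd0, norm_div, div_lt_one (norm_pos_iff.mpr hd0)]
    exact lt_of_lt_of_le habs hden
  -- integer-valuedness
  have hint : ∀ s : ℝ, ∃ k : ℤ, W s = (k : ℝ) * (2 * Real.pi) := by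
    intro s
    have hprod : ∀ N : ℕ, ∏ j ∈ Finset.range N, r s j = H s ((N : ℝ) / n) / H s 0 := by
      intro N
      induction N with
      | zero => simp [div_self (hne s 0)]
      | succ N ih =>
        have alg : ∀ A B P : ℂ, A ≠ 0 → B ≠ 0 → A / B * (P / A) = P / B := by
          intro A B P hA hB
          field_simp
          try ring
        rw [Finset.prod_range_succ, ih, hrdef]
        simp only
        have hc : ((N + 1 : ℕ) : ℝ) = (N : ℝ) + 1 := by push_cast; ring
        rw [hc]
        exact alg _ _ _ (hne _ _) (hne _ _)
    have hlast : H s ((n : ℝ) / n) = H s 0 := by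
      rw [div_self (ne_of_gt hnR)]
      have := hHper s 0
      rwa [zero_add] at this
    have hprod1 : ∏ j ∈ Finset.range n, r s j = 1 := by
      rw [hprod n, hlast, div_self (hne s 0)]
    have hexp : Complex.exp (∑ j ∈ Finset.range n, Complex.log (r s j)) = 1 := by
      rw [Complex.exp_sum,
        Finset.prod_congr rfl fun j _ => Complex.exp_log (hrne s j)]
      exact hprod1
    obtain ⟨k, hk⟩ := Complex.exp_eq_one_iff.mp hexp
    refine ⟨k, ?_⟩
    have him := congrArg Complex.im hk
    rw [Complex.im_sum] at him
    simp only [Complex.log_im] at him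
    have hrhs : ((k : ℂ) * (2 * (Real.pi : ℂ) * Complex.I)).im = (k : ℝ) * (2 * Real.pi) := by
      simp [Complex.mul_im]
    rw [hrhs] at him
    exact him
  -- continuity
  have hWcont : ContinuousOn W (Set.Icc 0 1) := by
    apply continuousOn_finset_sum
    intro j hj
    intro s hs
    have hj' : j < n := Finset.mem_range.mp hj
    have hrc : Continuous fun s => r s j := by
      apply Continuous.div
      · exact hHc.comp (continuous_id.prodMk continuous_const)
      · exact hHc.comp (continuous_id.prodMk continuous_const)
      · exact fun x => hne x _
    have hslit : r s j ∈ Complex.slitPlane := by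
      left
      have h1 := key s hs j hj'
      have h2 : (1 - r s j).re ≤ ‖1 - r s j‖ := Complex.re_le_norm _
      rw [norm_sub_rev] at h2
      have h3 : (1 - r s j).re = 1 - (r s j).re := by simp
      rw [h3] at h2
      linarith
    exact ContinuousAt.comp_continuousWithinAt (g := Complex.arg) (f := fun s => r s j)
      (Complex.continuousAt_arg hslit) hrc.continuousWithinAt
  -- endpoint values
  have hW1 : W 1 = 0 := by
    have hc0 : c ≠ 0 := by rw [← hH1 0]; exact hne 1 0
    rw [hWdef]
    simp only
    apply Finset.sum_eq_zero
    intro j _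
    rw [hrdef]
    simp [hH1, div_self hc0, Complex.arg_one]
  have hW0 : W 0 = 2 * Real.pi := by
    have hθmem : 2 * Real.pi / n ∈ Set.Ioc (-Real.pi) Real.pi := by
      constructor
      · have : (0 : ℝ) < 2 * Real.pi / n := by positivity
        linarith [Real.pi_pos]
      · rw [div_le_iff₀ hnR]
        nlinarith [Real.pi_pos]
    have hθ : Complex.arg (Complex.exp (((2 * Real.pi / n : ℝ) : ℂ) * Complex.I))
        = 2 * Real.pi / n := by
      rw [Complex.exp_mul_I]
      exact Complex.arg_cos_add_sin_mul_I hθmem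
    have hterm : ∀ j ∈ Finset.range n, Complex.arg (r 0 j) = 2 * Real.pi / n := by
      intro j _
      have hR0 : (R : ℂ) ≠ 0 := by
        exact_mod_cast ne_of_gt hRpos
      have e1 : r 0 j = Complex.exp (((2 * Real.pi / n : ℝ) : ℂ) * Complex.I) := by
        rw [hrdef]
        simp only
        rw [hH0, hH0, mul_div_mul_left _ _ hR0, ← Complex.exp_sub]
        congr 1
        push_cast
        field_simp
        ring
      rw [e1, hθ]
    rw [hWdef]
    simp only
    rw [Finset.sum_congr rfl hterm, Finset.sum_const, Finset.card_range, nsmul_eq_mul]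
    field_simp
  -- IVT
  have hsub := intermediate_value_Icc' (zero_le_one (α := ℝ)) hWcont
  have hmem : Real.pi ∈ Set.Icc (W 1) (W 0) := by
    rw [hW0, hW1]
    constructor
    · linarith [Real.pi_pos]
    · linarith [Real.pi_pos]
  obtain ⟨s, _, hWs⟩ := hsub hmem
  obtain ⟨k, hk⟩ := hint s
  have hπk : Real.pi = (k : ℝ) * (2 * Real.pi) := by rw [hWs] at hk; exact hk
  have h1 : Real.pi * (2 * (k : ℝ) - 1) = 0 := by linear_combination -hπk
  rcases mul_eq_zero.mp h1 with h | h
  · exact Real.pi_ne_zero h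
  · have h2 : (2 * (k : ℝ)) = 1 := by linarith
    have h3 : (2 * k : ℤ) = 1 := by exact_mod_cast h2
    omega

lemma glen_nonneg {w : ℂ → ℝ} (hw : ∀ z, 0 ≤ w z) (γ : ℝ → ℂ) : 0 ≤ glen w γ :=
  intervalIntegral.integral_nonneg zero_le_one fun t _ => mul_nonneg (hw _) (norm_nonneg _)

lemma gwidth_bddBelow (a : ℝ) {w : ℂ → ℝ} (hw : ∀ z, 0 ≤ w z) :
    BddBelow {L | ∃ γ : ℝ → ℂ, IsLoopIn (ann a) γ ∧ ¬ NullHomotopicIn (ann a) γ ∧ L = glen w γ} := by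
  refine ⟨0, fun L hL => ?_⟩
  obtain ⟨γ, _, _, rfl⟩ := hL
  exact glen_nonneg hw γ

end Aux


/-- if a minimizing sequence of homotopically nontrivial loops for the
`g̃ = |z|^{2λ}g`-length stays in `{1 - ε/2 ≤ |z| ≤ 1}` for infinitely many `k`,
then `λ ≤ log(l_{1-ε}/l₀) / (2 log((1-ε/2)/(1-ε)))`. -/
theorem stmt_7 (a ε lam : ℝ) (ha : 0 < a) (hε : 0 < ε) (hε1 : ε < 1) (haε : a < 1 - ε)
    (hlam : 0 < lam) (u : ℂ → ℝ)
    (hl0 : 0 < gwidth a (fun z => Real.exp (u z)))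
    (l1ε : ℝ)
    (hl1ε : l1ε = glen (fun z => Real.exp (u z))
      (fun t => ((1 - ε : ℝ) : ℂ) * Complex.exp (2 * Real.pi * Complex.I * (t : ℂ))))
    (γ : ℕ → ℝ → ℂ)
    (hloop : ∀ k, IsLoopIn (ann a) (γ k) ∧ ¬ NullHomotopicIn (ann a) (γ k))
    (hmin : Tendsto
      (fun k => glen (fun z => ‖z‖ ^ (2 * lam) * Real.exp (u z)) (γ k)) atTop
      (nhds (gwidth a (fun z => ‖z‖ ^ (2 * lam) * Real.exp (u z)))))
    (hin : ∃ᶠ k in atTop, ∀ t, 1 - ε / 2 ≤ ‖γ k t‖) :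
    lam ≤ Real.log (l1ε / gwidth a (fun z => Real.exp (u z))) /
      (2 * Real.log ((1 - ε / 2) / (1 - ε))) := by
  classical
  set w : ℂ → ℝ := fun z => Real.exp (u z) with hwdef
  set wt : ℂ → ℝ := fun z => ‖z‖ ^ (2 * lam) * Real.exp (u z) with hwtdef
  have hwpos : ∀ z, 0 ≤ w z := fun z => (Real.exp_pos _).le
  have hwtpos : ∀ z, 0 ≤ wt z := fun z =>
    mul_nonneg (Real.rpow_nonneg (norm_nonneg z) _) (Real.exp_pos _).le
  have hbddw := gwidth_bddBelow a hwpos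
  have hbddwt := gwidth_bddBelow a hwtpos
  have hB : (0 : ℝ) < 1 - ε := by linarith
  have hA : (0 : ℝ) < 1 - ε / 2 := by linarith
  set C : ℝ → ℂ := fun t => ((1 - ε : ℝ) : ℂ) * Complex.exp (2 * Real.pi * Complex.I * (t : ℂ))
    with hCdef
  -- glen of the circle w.r.t. wt
  have hcirc : glen wt C = (1 - ε) ^ (2 * lam) * l1ε := by
    rw [hl1ε]
    show (∫ t in (0:ℝ)..1, wt (C t) * ‖deriv C t‖)
      = (1 - ε) ^ (2 * lam) * ∫ t in (0:ℝ)..1, Real.exp (u (C t)) * ‖deriv C t‖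
    rw [← intervalIntegral.integral_const_mul]
    apply intervalIntegral.integral_congr
    intro t _
    have habs : ‖C t‖ = 1 - ε := circle_abs hB.le t
    simp only [hwtdef, habs]
    ring
  -- upper bound on the tilde-width
  have hupper : gwidth a wt ≤ (1 - ε) ^ (2 * lam) * l1ε := by
    apply csInf_le hbddwt
    exact ⟨C, circle_isLoopIn ha.le haε (by linarith),
      circle_not_nullhomotopic ha.le haε, hcirc.symm⟩
  -- lower bound for loops staying in the outer annulus
  have hlow : ∀ k, (∀ t, 1 - ε / 2 ≤ ‖γ k t‖) →
      (1 - ε / 2) ^ (2 * lam) * gwidth a w ≤ glen wt (γ k) := by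
    intro k hk
    have hloopk := (hloop k).1
    have hntk := (hloop k).2
    have hl0le : gwidth a w ≤ glen w (γ k) := csInf_le hbddw ⟨γ k, hloopk, hntk, rfl⟩
    set f : ℝ → ℝ := fun t => Real.exp (u (γ k t)) * ‖deriv (γ k) t‖ with hfdef
    have hfnn : ∀ t, 0 ≤ f t := fun t => mul_nonneg (Real.exp_pos _).le (norm_nonneg _)
    by_cases hfi : IntervalIntegrable f MeasureTheory.volume 0 1
    · have hgc : Continuous (γ k) := hloopk.1.continuous
      have hφc : Continuous fun t => ‖γ k t‖ ^ (2 * lam) := by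
        apply continuous_iff_continuousAt.mpr
        intro t
        have hbase : ‖γ k t‖ ≠ 0 := by
          have := hk t; intro h0; rw [h0] at this; linarith
        exact ContinuousAt.comp (x := t) (g := fun y : ℝ => y ^ (2 * lam))
          (f := fun t => ‖γ k t‖)
          (Real.continuousAt_rpow_const _ _ (Or.inl hbase))
          ((continuous_norm.comp hgc).continuousAt)
      have hgi : IntervalIntegrable (fun t => ‖γ k t‖ ^ (2 * lam) * f t)
          MeasureTheory.volume 0 1 := hfi.continuousOn_mul hφc.continuousOn
      have hci : IntervalIntegrable (fun t => (1 - ε / 2) ^ (2 * lam) * f t)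
          MeasureTheory.volume 0 1 := hfi.const_mul _
      have hmono := intervalIntegral.integral_mono_on zero_le_one hci hgi (fun t _ => by
        apply mul_le_mul_of_nonneg_right _ (hfnn t)
        exact Real.rpow_le_rpow hA.le (hk t) (by positivity))
      calc (1 - ε / 2) ^ (2 * lam) * gwidth a w
          ≤ (1 - ε / 2) ^ (2 * lam) * glen w (γ k) :=
            mul_le_mul_of_nonneg_left hl0le (Real.rpow_nonneg hA.le _)
        _ = ∫ t in (0:ℝ)..1, (1 - ε / 2) ^ (2 * lam) * f t := by
            rw [intervalIntegral.integral_const_mul]; rfl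
        _ ≤ ∫ t in (0:ℝ)..1, ‖γ k t‖ ^ (2 * lam) * f t := hmono
        _ = glen wt (γ k) := by
            show _ = ∫ t in (0:ℝ)..1, wt (γ k t) * ‖deriv (γ k) t‖
            apply intervalIntegral.integral_congr
            intro t _
            simp only [hwtdef, hfdef]
            ring
    · exfalso
      have hzero : glen w (γ k) = 0 := intervalIntegral.integral_undef hfi
      rw [hzero] at hl0le
      linarith
  -- lower bound on the tilde-width
  have hlower : (1 - ε / 2) ^ (2 * lam) * gwidth a w ≤ gwidth a wt := by
    by_contra hcon
    push_neg at hcon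
    have hev : ∀ᶠ k in atTop, glen wt (γ k) < (1 - ε / 2) ^ (2 * lam) * gwidth a w :=
      hmin.eventually_lt_const hcon
    obtain ⟨k, hk1, hk2⟩ := (hin.and_eventually hev).exists
    exact absurd hk2 (not_lt.mpr (hlow k hk1))
  have hchain : (1 - ε / 2) ^ (2 * lam) * gwidth a w ≤ (1 - ε) ^ (2 * lam) * l1ε :=
    hlower.trans hupper
  -- numerical conclusion
  have hc1 : (0 : ℝ) < (1 - ε / 2) ^ (2 * lam) := Real.rpow_pos_of_pos hA _
  have hc2 : (0 : ℝ) < (1 - ε) ^ (2 * lam) := Real.rpow_pos_of_pos hB _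
  have hl1pos : 0 < l1ε := by nlinarith [mul_pos hc1 hl0]
  have hlog : Real.log ((1 - ε / 2) ^ (2 * lam) * gwidth a w)
      ≤ Real.log ((1 - ε) ^ (2 * lam) * l1ε) :=
    Real.log_le_log (mul_pos hc1 hl0) hchain
  rw [Real.log_mul (ne_of_gt hc1) (ne_of_gt hl0), Real.log_mul (ne_of_gt hc2) (ne_of_gt hl1pos),
    Real.log_rpow hA, Real.log_rpow hB] at hlog
  have hD : 0 < Real.log ((1 - ε / 2) / (1 - ε)) := by
    apply Real.log_pos
    rw [lt_div_iff₀ hB]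
    linarith
  rw [le_div_iff₀ (by positivity), Real.log_div (ne_of_gt hl1pos) (ne_of_gt hl0),
    Real.log_div (ne_of_gt hA) (ne_of_gt hB)]
  nlinarith [hlog]
end
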